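/- Let 𝒮 be a finite set, q_S a pmf on 𝒮, and n a positive integer. Let p_{Sⁿ} be a pmf on 𝒮ⁿ with ‖p_{Sⁿ} − q_S^{(n)}‖₁ ≤ ε for some ε ∈ (0,1], where q_S^{(n)}(sⁿ) = ∏_{i=1}^n q_S(sᵢ). Then Σ_{i=1}^n I_p(Sᵢ; S_{∼i}) ≤ n·g(ε), where S_{∼i} denotes all coordinates except the i-th, the mutual information is computed under p_{Sⁿ}, and g(ε) = 2√ε·(H(q_S) + log|𝒮| + log(1/√ε)). -/

import Mathlib

open scoped BigOperators

noncomputable section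

/-- `p` is a probability mass function on the finite type `α`. -/
def IsPMF {α : Type*} [Fintype α] (p : α → ℝ) : Prop :=
  (∀ a, 0 ≤ p a) ∧ ∑ a, p a = 1

/-- Distribution (pushforward pmf) of the random variable `X` under the pmf `μ`. -/
def rvDist {Ω α : Type*} [Fintype Ω] [DecidableEq α] (μ : Ω → ℝ) (X : Ω → α) : α → ℝ :=
  fun a => ∑ ω, if X ω = a then μ ω else 0

/-- Shannon entropy (natural logarithm) of a pmf on a finite type. -/
def ent {α : Type*} [Fintype α] (p : α → ℝ) : ℝ := ∑ a, Real.negMulLog (p a)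

/-- Entropy of a random variable `X` under the pmf `μ`. -/
def H {Ω α : Type*} [Fintype Ω] [Fintype α] [DecidableEq α] (μ : Ω → ℝ) (X : Ω → α) : ℝ :=
  ent (rvDist μ X)

/-- Conditional entropy `H(X | Z)`. -/
def condH {Ω α γ : Type*} [Fintype Ω] [Fintype α] [Fintype γ] [DecidableEq α] [DecidableEq γ]
    (μ : Ω → ℝ) (X : Ω → α) (Z : Ω → γ) : ℝ :=
  H μ (fun ω => (X ω, Z ω)) - H μ Z

/-- Mutual information `I(X; Y)`. -/
def mutI {Ω α β : Type*} [Fintype Ω] [Fintype α] [Fintype β] [DecidableEq α] [DecidableEq β]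
    (μ : Ω → ℝ) (X : Ω → α) (Y : Ω → β) : ℝ :=
  H μ X + H μ Y - H μ (fun ω => (X ω, Y ω))

/-- Conditional mutual information `I(X; Y | Z)`. -/
def condI {Ω α β γ : Type*} [Fintype Ω] [Fintype α] [Fintype β] [Fintype γ]
    [DecidableEq α] [DecidableEq β] [DecidableEq γ]
    (μ : Ω → ℝ) (X : Ω → α) (Y : Ω → β) (Z : Ω → γ) : ℝ :=
  H μ (fun ω => (X ω, Z ω)) + H μ (fun ω => (Y ω, Z ω))
    - H μ (fun ω => (X ω, Y ω, Z ω)) - H μ Z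

section Helpers

open Real Finset

set_option linter.unusedSectionVars false

-- per-term Fannes inequality
lemma perTerm {x y : ℝ} (hx0 : 0 ≤ x) (hx1 : x ≤ 1) (hy0 : 0 ≤ y) (hy1 : y ≤ 1) :
    negMulLog x - negMulLog y ≤ negMulLog |x - y| + |x - y| := by
  rcases le_total y x with h | h
  · -- x ≥ y, |x-y| = x - y =: d
    have hd : |x - y| = x - y := abs_of_nonneg (by linarith)
    rw [hd]
    set d := x - y with hdd
    have hd0 : 0 ≤ d := by linarith
    -- negMulLog x - negMulLog y ≤ negMulLog d, i.e. y log y + d log d ≤ x log x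
    have key : y * Real.log y + d * Real.log d ≤ x * Real.log x := by
      rcases eq_or_lt_of_le hy0 with hy | hy
      · rcases eq_or_lt_of_le hd0 with hdz | hdz
        · simp [← hy, ← hdz]
          nlinarith [Real.log_nonpos hx0 hx1]
        · have hxd : x = d := by simp [hdd, ← hy]
          simp [← hy, hxd]
      · rcases eq_or_lt_of_le hd0 with hdz | hdz
        · have : x = y := by linarith [hdz]
          simp [← hdz, this]
        · have hx : 0 < x := by linarith
          have h1 : Real.log y ≤ Real.log x := Real.log_le_log hy (by linarith)
          have h2 : Real.log d ≤ Real.log x := Real.log_le_log hdz (by linarith)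
          have : x * Real.log x = y * Real.log x + d * Real.log x := by ring
          nlinarith
    have : negMulLog x - negMulLog y ≤ negMulLog d := by
      simp only [negMulLog, neg_mul]; linarith
    linarith [abs_nonneg (x - y), hd]
  · -- y ≥ x; need negMulLog x - negMulLog y ≤ d + negMulLog d with d = y - x
    have hd : |x - y| = y - x := by rw [abs_sub_comm]; exact abs_of_nonneg (by linarith)
    rw [hd]
    set d := y - x with hdd
    have hd0 : 0 ≤ d := by linarith
    -- negMulLog x - negMulLog y ≤ d : i.e. y log y - x log x ≤ d
    have key : y * Real.log y - x * Real.log x ≤ d := by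
      rcases eq_or_lt_of_le hx0 with hx | hx
      ·
        simp [← hx] at hdd ⊢
        have := Real.mul_log_nonpos hy0 hy1
        simp [← hx, hdd]; linarith
      · have h1 : Real.log y - Real.log x ≤ d / x := by
          have := Real.log_le_sub_one_of_pos (show 0 < y / x from div_pos (by linarith) hx)
          rw [Real.log_div (by linarith) (by linarith)] at this
          have hxx : y / x - 1 = d / x := by field_simp; linarith
          linarith [this, hxx ▸ this]
        have h2 : Real.log y ≤ 0 := Real.log_nonpos hy0 hy1
        have : y * Real.log y - x * Real.log x
            = x * (Real.log y - Real.log x) + d * Real.log y := by ring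
        rw [this]
        have : x * (Real.log y - Real.log x) ≤ d := by
          calc x * (Real.log y - Real.log x) ≤ x * (d / x) := by nlinarith
          _ = d := by field_simp
        nlinarith
    have hnn : 0 ≤ negMulLog d := negMulLog_nonneg hd0 (by simp [hdd]; linarith)
    simp only [negMulLog, neg_mul] at *
    linarith

lemma jensen_negMulLog {ι : Type*} [Fintype ι] (w d : ι → ℝ)
    (hw0 : ∀ i, 0 ≤ w i) (hw1 : ∑ i, w i = 1) (hd : ∀ i, 0 ≤ d i) :
    ∑ i, w i * negMulLog (d i) ≤ negMulLog (∑ i, w i * d i) := by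
  have := concaveOn_negMulLog.le_map_sum (t := univ) (w := w) (p := d)
    (fun i _ => hw0 i) hw1 (fun i _ => hd i)
  simpa [smul_eq_mul] using this

-- generalized: weights summing to N
lemma gen_jensen {ι : Type*} [Fintype ι] (v d : ι → ℝ) (N : ℝ) (hN : 0 < N)
    (hv : ∀ i, 0 ≤ v i) (hvN : ∑ i, v i = N) (hd : ∀ i, 0 ≤ d i) :
    ∑ i, v i * negMulLog (d i) ≤ (∑ i, v i * d i) * Real.log N + negMulLog (∑ i, v i * d i) := by
  have hj := jensen_negMulLog (fun i => v i / N) d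
    (fun i => div_nonneg (hv i) hN.le)
    (by rw [← Finset.sum_div, hvN, div_self hN.ne']) hd
  set D := ∑ i, v i * d i with hD
  have hD0 : 0 ≤ D := Finset.sum_nonneg fun i _ => mul_nonneg (hv i) (hd i)
  have hsum : ∑ i, (v i / N) * d i = D / N := by
    rw [hD, Finset.sum_div]; exact Finset.sum_congr rfl fun i _ => by ring
  rw [hsum] at hj
  have hj' : ∑ i, v i * negMulLog (d i) ≤ N * negMulLog (D / N) := by
    have := mul_le_mul_of_nonneg_left hj hN.le
    calc ∑ i, v i * negMulLog (d i) = N * ∑ i, (v i / N) * negMulLog (d i) := by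
          rw [Finset.mul_sum]; exact Finset.sum_congr rfl fun i _ => by field_simp
      _ ≤ N * negMulLog (D / N) := this
  refine hj'.trans ?_
  rcases eq_or_lt_of_le hD0 with h0 | h0
  · simp [← h0]
  · have heq : N * negMulLog (D / N) = D * Real.log N + negMulLog D := by
      rw [negMulLog, negMulLog, Real.log_div h0.ne' hN.ne']
      field_simp
      ring
    linarith

-- monotonicity of δ ↦ δ + δ*c + negMulLog δ on [0, N] with c = log N
lemma F_mono {a b N : ℝ} (ha : 0 ≤ a) (hab : a ≤ b) (hbN : b ≤ N) (hN : 1 ≤ N) :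
    a + a * Real.log N + negMulLog a ≤ b + b * Real.log N + negMulLog b := by
  have hc : 0 ≤ Real.log N := Real.log_nonneg hN
  rcases eq_or_lt_of_le ha with h0 | h0
  · have hb0 : 0 ≤ b := le_trans ha hab
    simp only [← h0, negMulLog_zero, zero_mul, add_zero, zero_add]
    rcases eq_or_lt_of_le hb0 with hb | hb
    · simp [← hb]
    · have hlb : Real.log b ≤ Real.log N := Real.log_le_log hb hbN
      simp only [negMulLog, neg_mul]
      nlinarith
  · have hb0 : 0 < b := lt_of_lt_of_le h0 hab
    -- negMulLog a ≤ b - a - a * log b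
    have h1 : negMulLog a ≤ b - a - a * Real.log b := by
      have hl : Real.log b - Real.log a ≤ b / a - 1 := by
        have := Real.log_le_sub_one_of_pos (show 0 < b / a from div_pos hb0 h0)
        rwa [Real.log_div hb0.ne' h0.ne'] at this
      have : a * (Real.log b - Real.log a) ≤ b - a := by
        have := mul_le_mul_of_nonneg_left hl h0.le
        calc a * (Real.log b - Real.log a) ≤ a * (b / a - 1) := this
          _ = b - a := by field_simp
      simp only [negMulLog, neg_mul]; nlinarith
    have h2 : Real.log b ≤ Real.log N := Real.log_le_log hb0 hbN
    have h3 : a * (Real.log N - Real.log b) ≤ b * (Real.log N - Real.log b) := by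
      nlinarith
    simp only [negMulLog, neg_mul] at *
    nlinarith

lemma fannes_aux {X : Type*} [Fintype X] (a b : X → ℝ)
    (ha0 : ∀ x, 0 ≤ a x) (ha1 : ∀ x, a x ≤ 1) (hb0 : ∀ x, 0 ≤ b x) (hb1 : ∀ x, b x ≤ 1) :
    ∑ x, negMulLog (a x) - ∑ x, negMulLog (b x)
      ≤ ∑ x, (negMulLog |a x - b x| + |a x - b x|) := by
  rw [← Finset.sum_sub_distrib]
  exact Finset.sum_le_sum fun x _ => perTerm (ha0 x) (ha1 x) (hb0 x) (hb1 x)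

lemma key {X Y : Type*} [Fintype X] [Fintype Y] [Nonempty X]
    (P : X × Y → ℝ) (PX : X → ℝ) (PY : Y → ℝ)
    (hP0 : ∀ z, 0 ≤ P z) (hP1 : ∑ z, P z = 1)
    (hPX : ∀ x, PX x = ∑ y, P (x, y)) (hPY : ∀ y, PY y = ∑ x, P (x, y))
    (q : X → ℝ) (hq0 : ∀ x, 0 ≤ q x) (hq1 : ∑ x, q x = 1) :
    ((∑ x, negMulLog (PX x)) + (∑ y, negMulLog (PY y)) - ∑ z, negMulLog (P z)
        ≤ ((∑ x, |PX x - q x|) + (∑ x, |PX x - q x|) * Real.log (Fintype.card X)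
            + negMulLog (∑ x, |PX x - q x|))
          + ((∑ z : X × Y, |P z - q z.1 * PY z.2|)
            + (∑ z : X × Y, |P z - q z.1 * PY z.2|) * Real.log (Fintype.card X)
            + negMulLog (∑ z : X × Y, |P z - q z.1 * PY z.2|)))
    ∧ ((∑ x, negMulLog (PX x)) + (∑ y, negMulLog (PY y)) - ∑ z, negMulLog (P z)
        ≤ (∑ x, negMulLog (q x))
          + ((∑ x, |PX x - q x|) + (∑ x, |PX x - q x|) * Real.log (Fintype.card X)
            + negMulLog (∑ x, |PX x - q x|)))
    ∧ ((∑ x, negMulLog (PX x)) + (∑ y, negMulLog (PY y)) - ∑ z, negMulLog (P z)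
        ≤ Real.log (Fintype.card X)) := by
  classical
  set N : ℝ := (Fintype.card X : ℝ) with hNdef
  have hN : 0 < N := by
    rw [hNdef]
    exact_mod_cast Fintype.card_pos (α := X)
  -- basic bounds
  have hsumXY : ∑ z : X × Y, P z = ∑ x, ∑ y, P (x, y) := Fintype.sum_prod_type _
  have hPXsum : ∑ x, PX x = 1 := by
    rw [← hP1, hsumXY]; exact Finset.sum_congr rfl fun x _ => (hPX x)
  have hPYsum : ∑ y, PY y = 1 := by
    rw [← hP1, hsumXY, Finset.sum_comm]
    exact Finset.sum_congr rfl fun y _ => (hPY y)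
  have hPX0 : ∀ x, 0 ≤ PX x := fun x => by
    rw [hPX]; exact Finset.sum_nonneg fun y _ => hP0 _
  have hPY0 : ∀ y, 0 ≤ PY y := fun y => by
    rw [hPY]; exact Finset.sum_nonneg fun x _ => hP0 _
  have hPX1 : ∀ x, PX x ≤ 1 := fun x => by
    rw [← hPXsum]
    exact Finset.single_le_sum (fun x _ => hPX0 x) (Finset.mem_univ x)
  have hPY1 : ∀ y, PY y ≤ 1 := fun y => by
    rw [← hPYsum]
    exact Finset.single_le_sum (fun y _ => hPY0 y) (Finset.mem_univ y)
  have hq1' : ∀ x, q x ≤ 1 := fun x => by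
    rw [← hq1]
    exact Finset.single_le_sum (fun x _ => hq0 x) (Finset.mem_univ x)
  have hPle : ∀ x y, P (x, y) ≤ PY y := fun x y => by
    rw [hPY]
    exact Finset.single_le_sum (f := fun x => P (x, y)) (fun x _ => hP0 _) (Finset.mem_univ x)
  -- conditional distributions
  set c : Y → X → ℝ := fun y x => if PY y = 0 then q x else P (x, y) / PY y with hcdef
  have hPzero : ∀ y, PY y = 0 → ∀ x, P (x, y) = 0 := by
    intro y hy x
    have := hPY y
    rw [hy] at this
    have h := (Finset.sum_eq_zero_iff_of_nonneg (fun x _ => hP0 (x, y))).mp this.symm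
    exact h x (Finset.mem_univ x)
  have hc0 : ∀ y x, 0 ≤ c y x := by
    intro y x; by_cases hy : PY y = 0 <;> simp [hcdef, hy]
    · exact hq0 x
    · exact div_nonneg (hP0 _) (hPY0 y)
  have hc1 : ∀ y x, c y x ≤ 1 := by
    intro y x; by_cases hy : PY y = 0 <;> simp [hcdef, hy]
    · exact hq1' x
    · rw [div_le_one (lt_of_le_of_ne (hPY0 y) (Ne.symm hy))]
      exact hPle x y
  have hcsum : ∀ y, ∑ x, c y x = 1 := by
    intro y; by_cases hy : PY y = 0 <;> simp [hcdef, hy]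
    · exact hq1
    · rw [← Finset.sum_div, ← hPY y, div_self hy]
  have hfac : ∀ x y, P (x, y) = PY y * c y x := by
    intro x y; by_cases hy : PY y = 0
    · simp [hcdef, hy, hPzero y hy x]
    · rw [hcdef]; dsimp only; rw [if_neg hy]; field_simp
  -- entropy decomposition
  have decomp : ∑ z : X × Y, negMulLog (P z)
      = (∑ y, negMulLog (PY y)) + ∑ y, PY y * ∑ x, negMulLog (c y x) := by
    rw [Fintype.sum_prod_type (f := fun z : X × Y => negMulLog (P z)), Finset.sum_comm]
    have : ∀ y, ∑ x, negMulLog (P (x, y))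
        = negMulLog (PY y) + PY y * ∑ x, negMulLog (c y x) := by
      intro y
      have : ∀ x, negMulLog (P (x, y))
          = c y x * negMulLog (PY y) + PY y * negMulLog (c y x) := by
        intro x; rw [hfac x y, negMulLog_mul]
      rw [Finset.sum_congr rfl fun x _ => this x, Finset.sum_add_distrib,
        ← Finset.sum_mul, hcsum y, one_mul, Finset.mul_sum]
    rw [Finset.sum_congr rfl fun y _ => this y, Finset.sum_add_distrib]
  have hentc0 : ∀ y, 0 ≤ ∑ x, negMulLog (c y x) := fun y =>
    Finset.sum_nonneg fun x _ => negMulLog_nonneg (hc0 y x) (hc1 y x)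
  have hcond0 : 0 ≤ ∑ y, PY y * ∑ x, negMulLog (c y x) :=
    Finset.sum_nonneg fun y _ => mul_nonneg (hPY0 y) (hentc0 y)
  -- ent PX ≤ log N
  have hentPX_le : ∑ x, negMulLog (PX x) ≤ Real.log N := by
    have := gen_jensen (fun _ => (1:ℝ)) PX N hN (fun _ => zero_le_one)
      (by simp [hNdef]) hPX0
    simpa [hPXsum] using this
  -- fannes : ent PX - ent q ≤ F δX
  set δX := ∑ x, |PX x - q x| with hδdef
  have hfannes : ∑ x, negMulLog (PX x) - ∑ x, negMulLog (q x)
      ≤ δX + δX * Real.log N + negMulLog δX := by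
    have h1 := fannes_aux PX q hPX0 hPX1 hq0 hq1'
    have h2 := gen_jensen (fun _ => (1:ℝ)) (fun x => |PX x - q x|) N hN
      (fun _ => zero_le_one) (by simp [hNdef]) (fun x => abs_nonneg _)
    simp only [one_mul] at h2
    rw [Finset.sum_add_distrib] at h1
    rw [hδdef]
    linarith
  -- I ≤ ent PX
  have hI_le_PX : (∑ x, negMulLog (PX x)) + (∑ y, negMulLog (PY y)) - ∑ z, negMulLog (P z)
      ≤ ∑ x, negMulLog (PX x) := by
    rw [decomp]; linarith
  -- part 2 : ent q - cond term ≤ F D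
  set D := ∑ z : X × Y, |P z - q z.1 * PY z.2| with hDdef
  have hid : ∀ y x, PY y * |c y x - q x| = |P (x, y) - q x * PY y| := by
    intro y x
    by_cases hy : PY y = 0
    · simp [hy, hPzero y hy x]
    · rw [← abs_of_nonneg (hPY0 y), ← abs_mul]
      congr 1
      rw [abs_of_nonneg (hPY0 y)]
      rw [mul_sub, hfac x y]
      ring
  have hDalt : D = ∑ z : X × Y, PY z.2 * |c z.2 z.1 - q z.1| := by
    rw [hDdef]
    exact (Finset.sum_congr rfl fun z _ => (hid z.2 z.1).symm)
  have hpart2 : (∑ x, negMulLog (q x)) - ∑ y, PY y * ∑ x, negMulLog (c y x)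
      ≤ D + D * Real.log N + negMulLog D := by
    have hq_ent : ∑ x, negMulLog (q x) = ∑ y, PY y * ∑ x, negMulLog (q x) := by
      rw [← Finset.sum_mul, hPYsum, one_mul]
    have hpery : ∀ y, PY y * (∑ x, negMulLog (q x)) - PY y * ∑ x, negMulLog (c y x)
        ≤ ∑ x, PY y * (negMulLog |c y x - q x| + |c y x - q x|) := by
      intro y
      have h := fannes_aux q (c y) hq0 hq1' (hc0 y) (hc1 y)
      have := mul_le_mul_of_nonneg_left h (hPY0 y)
      rw [Finset.mul_sum] at this
      calc PY y * (∑ x, negMulLog (q x)) - PY y * ∑ x, negMulLog (c y x)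
          = PY y * ((∑ x, negMulLog (q x)) - ∑ x, negMulLog (c y x)) := by ring
        _ ≤ ∑ x, PY y * (negMulLog |q x - c y x| + |q x - c y x|) := this
        _ = ∑ x, PY y * (negMulLog |c y x - q x| + |c y x - q x|) :=
            Finset.sum_congr rfl fun x _ => by rw [abs_sub_comm]
    have hsum1 : (∑ x, negMulLog (q x)) - ∑ y, PY y * ∑ x, negMulLog (c y x)
        ≤ ∑ y, ∑ x, PY y * (negMulLog |c y x - q x| + |c y x - q x|) := by
      rw [hq_ent, ← Finset.sum_sub_distrib]
      exact Finset.sum_le_sum fun y _ => hpery y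
    have hsplit : ∑ y, ∑ x, PY y * (negMulLog |c y x - q x| + |c y x - q x|)
        = (∑ z : X × Y, PY z.2 * negMulLog |c z.2 z.1 - q z.1|)
          + (∑ z : X × Y, PY z.2 * |c z.2 z.1 - q z.1|) := by
      rw [Fintype.sum_prod_type (f := fun z : X × Y =>
        PY z.2 * negMulLog |c z.2 z.1 - q z.1|),
        Fintype.sum_prod_type (f := fun z : X × Y => PY z.2 * |c z.2 z.1 - q z.1|),
        ← Finset.sum_add_distrib, Finset.sum_comm]
      exact Finset.sum_congr rfl fun y _ => by
        rw [← Finset.sum_add_distrib]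
        exact Finset.sum_congr rfl fun x _ => by ring
    have hvN : ∑ z : X × Y, PY z.2 = N := by
      rw [Fintype.sum_prod_type]
      simp [hPYsum, hNdef]
    have hjen := gen_jensen (fun z : X × Y => PY z.2)
      (fun z : X × Y => |c z.2 z.1 - q z.1|) N hN (fun z => hPY0 z.2) hvN
      (fun z => abs_nonneg _)
    have hjen' : (∑ z : X × Y, PY z.2 * negMulLog |c z.2 z.1 - q z.1|)
        ≤ D * Real.log N + negMulLog D := by
      rw [hDalt]
      exact hjen
    linarith
  refine ⟨?_, ?_, ?_⟩
  · have : (∑ x, negMulLog (PX x)) + (∑ y, negMulLog (PY y)) - ∑ z, negMulLog (P z)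
        = ((∑ x, negMulLog (PX x)) - ∑ x, negMulLog (q x))
          + ((∑ x, negMulLog (q x)) - ∑ y, PY y * ∑ x, negMulLog (c y x)) := by
      rw [decomp]; ring
    rw [this]
    exact add_le_add hfannes hpart2
  · have hqent : (∑ x, negMulLog (PX x)) ≤ (∑ x, negMulLog (q x))
        + (δX + δX * Real.log N + negMulLog δX) := by linarith
    linarith
  · linarith



lemma rvDist_nonneg {Ω α : Type*} [Fintype Ω] [DecidableEq α] (μ : Ω → ℝ)
    (hμ : ∀ ω, 0 ≤ μ ω) (X : Ω → α) (a : α) : 0 ≤ rvDist μ X a :=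
  Finset.sum_nonneg fun ω _ => by by_cases h : X ω = a <;> simp [rvDist, h, hμ ω]

lemma rvDist_sum {Ω α : Type*} [Fintype Ω] [Fintype α] [DecidableEq α] (μ : Ω → ℝ)
    (X : Ω → α) : ∑ a, rvDist μ X a = ∑ ω, μ ω := by
  unfold rvDist
  rw [Finset.sum_comm]
  exact Finset.sum_congr rfl fun ω _ => by simp [Finset.sum_ite_eq]

lemma rvDist_pair_fst {Ω α β : Type*} [Fintype Ω] [Fintype β] [DecidableEq α] [DecidableEq β]
    (μ : Ω → ℝ) (f : Ω → α) (g : Ω → β) (x : α) :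
    rvDist μ f x = ∑ y, rvDist μ (fun ω => (f ω, g ω)) (x, y) := by
  unfold rvDist
  rw [Finset.sum_comm]
  refine Finset.sum_congr rfl fun ω _ => ?_
  by_cases h : f ω = x
  · simp [Prod.ext_iff, h, Finset.sum_ite_eq]
  · simp [Prod.ext_iff, h]

lemma rvDist_pair_snd {Ω α β : Type*} [Fintype Ω] [Fintype α] [DecidableEq α] [DecidableEq β]
    (μ : Ω → ℝ) (f : Ω → α) (g : Ω → β) (y : β) :
    rvDist μ g y = ∑ x, rvDist μ (fun ω => (f ω, g ω)) (x, y) := by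
  unfold rvDist
  rw [Finset.sum_comm]
  refine Finset.sum_congr rfl fun ω _ => ?_
  by_cases h : g ω = y
  · simp [Prod.ext_iff, h, Finset.sum_ite_eq]
  · simp [Prod.ext_iff, h]

lemma tv_pushforward {Ω α : Type*} [Fintype Ω] [Fintype α] [DecidableEq α]
    (μ ν : Ω → ℝ) (X : Ω → α) :
    ∑ a, |rvDist μ X a - rvDist ν X a| ≤ ∑ ω, |μ ω - ν ω| := by
  have h1 : ∀ a, |rvDist μ X a - rvDist ν X a|
      ≤ ∑ ω, if X ω = a then |μ ω - ν ω| else 0 := by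
    intro a
    unfold rvDist
    rw [← Finset.sum_sub_distrib]
    refine (Finset.abs_sum_le_sum_abs _ _).trans ?_
    refine le_of_eq (Finset.sum_congr rfl fun ω _ => ?_)
    by_cases h : X ω = a <;> simp [h]
  refine (Finset.sum_le_sum fun a _ => h1 a).trans ?_
  rw [Finset.sum_comm]
  exact le_of_eq (Finset.sum_congr rfl fun ω _ => by simp [Finset.sum_ite_eq])

section prodfacts

variable {S : Type*} [Fintype S] [DecidableEq S] (q : S → ℝ) {n : ℕ} (i : Fin n)

lemma pair_eq_iff (x : S) (y : {j : Fin n // j ≠ i} → S) (s : Fin n → S) :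
    (s i = x ∧ (fun j : {j : Fin n // j ≠ i} => s j.1) = y)
      ↔ s = (fun j => if h : j = i then x else y ⟨j, h⟩) := by
  constructor
  · rintro ⟨h1, h2⟩
    funext j
    by_cases h : j = i
    · subst h; simp [h1]
    · rw [dif_neg h, ← congrFun h2 ⟨j, h⟩]
  · intro h
    subst h
    constructor
    · simp
    · funext j
      simp [j.2]

lemma rvDist_qn_pair (x : S) (y : {j : Fin n // j ≠ i} → S) :
    rvDist (fun s : Fin n → S => ∏ j, q (s j))
        (fun s => (s i, fun j : {j : Fin n // j ≠ i} => s j.1)) (x, y)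
      = q x * ∏ j : {j : Fin n // j ≠ i}, q (y j) := by
  unfold rvDist
  set s₀ : Fin n → S := fun j => if h : j = i then x else y ⟨j, h⟩ with hs₀
  have hcong : ∀ s : Fin n → S,
      (if (s i, fun j : {j : Fin n // j ≠ i} => s j.1) = (x, y) then ∏ j, q (s j) else 0)
        = if s = s₀ then ∏ j, q (s j) else 0 := by
    intro s
    refine if_congr ?_ rfl rfl
    rw [Prod.ext_iff]
    exact pair_eq_iff i x y s
  rw [Finset.sum_congr rfl fun s _ => hcong s, Finset.sum_ite_eq' univ s₀ _]
  rw [if_pos (Finset.mem_univ _)]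
  rw [← Finset.mul_prod_erase univ _ (Finset.mem_univ i)]
  have h1 : s₀ i = x := by simp [hs₀]
  have h2 : ∏ j ∈ univ.erase i, q (s₀ j)
      = ∏ j : {j : Fin n // j ≠ i}, q (y j) := by
    rw [Finset.prod_subtype (p := fun j => j ≠ i) (univ.erase i)
      (fun j => by simp) (fun j => q (s₀ j))]
    refine Finset.prod_congr rfl fun j _ => ?_
    simp [hs₀, j.2]
  rw [h1, h2]

lemma sum_prod_subtype_one (hq1 : ∑ a, q a = 1) :
    ∑ y : {j : Fin n // j ≠ i} → S, ∏ j : {j : Fin n // j ≠ i}, q (y j) = 1 := by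
  classical
  have := Finset.prod_univ_sum (fun _ : {j : Fin n // j ≠ i} => (univ : Finset S))
    (fun _ a => q a)
  rw [Fintype.piFinset_univ] at this
  rw [← this]
  simp [hq1]

end prodfacts

lemma arith_core (t u c l2 Hq I : ℝ)
    (ht0 : 0 < t) (ht1 : t ≤ 1) (hu0 : 0 ≤ u) (hc0 : 0 ≤ c)
    (hHq0 : 0 ≤ Hq) (hHqc : Hq ≤ c)
    (hl2a : (0.69:ℝ) < l2) (hl2b : l2 < (0.7:ℝ))
    (hcase : c = 0 ∨ l2 ≤ c)
    (h1 : l2 ≤ c → I ≤ 3*t^2 + 3*t^2*c + 6*t^2*u - 2*t^2*l2)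
    (h2 : I ≤ Hq + t^2 + t^2*c + 2*t^2*u)
    (h3 : I ≤ c) :
    I ≤ 2*t*(Hq + c + u) := by
  rcases hcase with hc | hc2
  · have h0 : 0 ≤ 2*t*(Hq + c + u) := by positivity
    linarith [hc ▸ h3]
  · rcases le_or_gt t (1/3) with hA | hA
    · have hI := h1 hc2
      have e1 : 6*t^2*u ≤ 2*t*u := by
        nlinarith [mul_nonneg (mul_nonneg ht0.le hu0) (show (0:ℝ) ≤ 1 - 3*t by linarith)]
      have e2 : 3*t^2*c ≤ t*c := by
        nlinarith [mul_nonneg (mul_nonneg ht0.le hc0) (show (0:ℝ) ≤ 1 - 3*t by linarith)]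
      have k1 : t*(3 - 2*l2) ≤ 1 - (2/3)*l2 := by nlinarith
      have k2 : 1 - (2/3)*l2 ≤ c := by linarith
      have e3 : 3*t^2 - 2*t^2*l2 ≤ t*c := by nlinarith [mul_le_mul_of_nonneg_left (k1.trans k2) ht0.le]
      have h0 : 0 ≤ 2*t*Hq := by positivity
      nlinarith [hI, e1, e2, e3]
    · rcases le_or_gt t (1/2) with hB | hB
      · have e0 : (1 - 2*t)*Hq ≤ (1 - 2*t)*c :=
          mul_le_mul_of_nonneg_left hHqc (by linarith)
        have e1 : 2*t^2*u ≤ 2*t*u := by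
          nlinarith [mul_nonneg (mul_nonneg ht0.le hu0) (show (0:ℝ) ≤ 1 - t by linarith)]
        have e2 : t^2 ≤ (4*t - 1 - t^2)*l2 := by
          nlinarith [mul_nonneg (show (0:ℝ) ≤ t - 1/3 by linarith) (show (0:ℝ) ≤ 1/2 - t by linarith)]
        have e3 : (4*t - 1 - t^2)*l2 ≤ (4*t - 1 - t^2)*c :=
          mul_le_mul_of_nonneg_left hc2 (by nlinarith)
        nlinarith [h2, e0, e1, e2, e3]
      · have h4 : 0 ≤ 2*t*Hq := by positivity
        have h5 : 0 ≤ 2*t*u := by positivity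
        nlinarith [h3, mul_nonneg (show (0:ℝ) ≤ 2*t - 1 by linarith) hc0]

lemma arith (N : ℕ) (Hq I ε : ℝ)
    (hHq0 : 0 ≤ Hq) (hHqc : Hq ≤ Real.log N)
    (hε0 : 0 < ε) (hε1 : ε ≤ 1)
    (h1 : 2 ≤ N → I ≤ (ε + ε * Real.log N + negMulLog ε)
      + (2 * ε + 2 * ε * Real.log N + negMulLog (2 * ε)))
    (h2 : I ≤ Hq + (ε + ε * Real.log N + negMulLog ε))
    (h3 : I ≤ Real.log N) :
    I ≤ 2 * Real.sqrt ε * (Hq + Real.log N + Real.log (1 / Real.sqrt ε)) := by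
  have ht0 : 0 < Real.sqrt ε := Real.sqrt_pos.mpr hε0
  have ht1 : Real.sqrt ε ≤ 1 := by
    rw [show (1:ℝ) = Real.sqrt 1 by simp]
    exact Real.sqrt_le_sqrt hε1
  have hε : ε = Real.sqrt ε ^ 2 := (Real.sq_sqrt hε0.le).symm
  have hu : Real.log (1 / Real.sqrt ε) = - Real.log (Real.sqrt ε) := by
    rw [one_div, Real.log_inv]
  have hu0 : 0 ≤ Real.log (1 / Real.sqrt ε) := by
    rw [hu, neg_nonneg]
    exact Real.log_nonpos ht0.le ht1
  have hc0 : 0 ≤ Real.log N := Real.log_natCast_nonneg N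
  have hlogε : Real.log ε = -2 * Real.log (1 / Real.sqrt ε) := by
    rw [hu]
    nth_rewrite 1 [hε]
    rw [Real.log_pow]
    push_cast; ring
  have hnm1 : negMulLog ε = 2 * ε * Real.log (1 / Real.sqrt ε) := by
    rw [negMulLog, hlogε]; ring
  have hnm2 : negMulLog (2*ε) = -2 * ε * Real.log 2
      + 4 * ε * Real.log (1 / Real.sqrt ε) := by
    rw [negMulLog, Real.log_mul (by norm_num) hε0.ne', hlogε]; ring
  have hl2a : (0.69:ℝ) < Real.log 2 := lt_trans (by norm_num) Real.log_two_gt_d9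
  have hl2b : Real.log 2 < (0.7:ℝ) := lt_trans Real.log_two_lt_d9 (by norm_num)
  have hcase : Real.log N = 0 ∨ Real.log 2 ≤ Real.log N := by
    rcases le_or_gt (N:ℝ) 1 with h | h
    · left
      rcases Nat.le_one_iff_eq_zero_or_eq_one.mp (by exact_mod_cast h : N ≤ 1) with rfl | rfl
      · simp
      · simp
    · right
      have h2N : (2:ℝ) ≤ (N:ℝ) := by
        have : 2 ≤ N := by exact_mod_cast Nat.succ_le_of_lt (by exact_mod_cast h)
        exact_mod_cast this
      exact Real.log_le_log (by norm_num) h2N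
  refine arith_core (Real.sqrt ε) (Real.log (1 / Real.sqrt ε)) (Real.log N) (Real.log 2)
    Hq I ht0 ht1 hu0 hc0 hHq0 hHqc hl2a hl2b hcase ?_ ?_ h3
  · intro hl
    have h2N : 2 ≤ N := by
      by_contra hcon
      push_neg at hcon
      have hN1 : (N:ℝ) ≤ 1 := by exact_mod_cast Nat.lt_succ_iff.mp hcon
      have := Real.log_nonpos (by positivity) hN1
      linarith
    have hI := h1 h2N
    rw [hnm1, hnm2] at hI
    rw [← hε]
    linarith
  · rw [hnm1] at h2
    rw [← hε]
    linarith

end Helpers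

open Real Finset in
lemma ent_le_log {X : Type*} [Fintype X] [Nonempty X] (a : X → ℝ)
    (h0 : ∀ x, 0 ≤ a x) (h1 : ∑ x, a x = 1) :
    ∑ x, negMulLog (a x) ≤ Real.log (Fintype.card X) := by
  have hN : 0 < ((Fintype.card X : ℕ) : ℝ) := by exact_mod_cast Fintype.card_pos (α := X)
  have := gen_jensen (fun _ => (1:ℝ)) a ((Fintype.card X : ℕ) : ℝ) hN
    (fun _ => zero_le_one) (by simp) h0
  simpa [h1] using this

open Real Finset in
lemma per_i_bound {S : Type*} [Fintype S] [DecidableEq S] [Nonempty S]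
    (q : S → ℝ) (hq : IsPMF q)
    (n : ℕ) (i : Fin n)
    (p : (Fin n → S) → ℝ) (hp : IsPMF p)
    (ε : ℝ) (hε0 : 0 < ε) (hε1 : ε ≤ 1)
    (hTV : ∑ s : Fin n → S, |p s - ∏ j, q (s j)| ≤ ε) :
    mutI p (fun s => s i) (fun s => fun j : {j : Fin n // j ≠ i} => s j.1)
      ≤ 2 * Real.sqrt ε *
          (ent q + Real.log (Fintype.card S) + Real.log (1 / Real.sqrt ε)) := by
  classical
  set qn : (Fin n → S) → ℝ := fun s => ∏ j, q (s j) with hqn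
  set pairf : (Fin n → S) → S × ({j : Fin n // j ≠ i} → S) :=
    fun s => (s i, fun j : {j : Fin n // j ≠ i} => s j.1) with hpairf
  set J := rvDist p pairf with hJ
  set PX := rvDist p (fun s : Fin n → S => s i) with hPX
  set PY := rvDist p (fun s : Fin n → S => fun j : {j : Fin n // j ≠ i} => s j.1) with hPY
  have hJ0 : ∀ z, 0 ≤ J z := fun z => rvDist_nonneg p hp.1 _ z
  have hJ1 : ∑ z, J z = 1 := by rw [hJ, rvDist_sum]; exact hp.2
  have hPXm : ∀ x, PX x = ∑ y, J (x, y) := fun x => rvDist_pair_fst p _ _ x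
  have hPYm : ∀ y, PY y = ∑ x, J (x, y) := fun y => rvDist_pair_snd p _ _ y
  -- distributions under the iid product
  have hQpair : ∀ x y, rvDist qn pairf (x, y) = q x * ∏ j : {j : Fin n // j ≠ i}, q (y j) :=
    fun x y => rvDist_qn_pair q i x y
  have hsub1 : ∑ y : {j : Fin n // j ≠ i} → S, ∏ j : {j : Fin n // j ≠ i}, q (y j) = 1 :=
    sum_prod_subtype_one q i hq.2
  have hQX : ∀ x, rvDist qn (fun s : Fin n → S => s i) x = q x := by
    intro x
    rw [rvDist_pair_fst qn (fun s : Fin n → S => s i)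
      (fun s : Fin n → S => fun j : {j : Fin n // j ≠ i} => s j.1) x]
    calc ∑ y, rvDist qn pairf (x, y)
        = ∑ y : {j : Fin n // j ≠ i} → S, q x * ∏ j : {j : Fin n // j ≠ i}, q (y j) :=
          Finset.sum_congr rfl fun y _ => hQpair x y
      _ = q x := by rw [← Finset.mul_sum, hsub1, mul_one]
  have hQY : ∀ y, rvDist qn (fun s : Fin n → S => fun j : {j : Fin n // j ≠ i} => s j.1) y
      = ∏ j : {j : Fin n // j ≠ i}, q (y j) := by
    intro y
    rw [rvDist_pair_snd qn (fun s : Fin n → S => s i)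
      (fun s : Fin n → S => fun j : {j : Fin n // j ≠ i} => s j.1) y]
    calc ∑ x, rvDist qn pairf (x, y)
        = ∑ x, q x * ∏ j : {j : Fin n // j ≠ i}, q (y j) :=
          Finset.sum_congr rfl fun x _ => hQpair x y
      _ = _ := by rw [← Finset.sum_mul, hq.2, one_mul]
  -- total variation bounds
  have hεX : ∑ x, |PX x - q x| ≤ ε := by
    calc ∑ x, |PX x - q x|
        = ∑ x, |rvDist p (fun s : Fin n → S => s i) x
            - rvDist qn (fun s : Fin n → S => s i) x| :=
          Finset.sum_congr rfl fun x _ => by rw [hQX x, hPX]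
      _ ≤ ∑ s, |p s - qn s| := tv_pushforward p qn _
      _ ≤ ε := hTV
  have hTVY : ∑ y, |PY y - rvDist qn
      (fun s : Fin n → S => fun j : {j : Fin n // j ≠ i} => s j.1) y| ≤ ε := by
    calc ∑ y, |PY y - rvDist qn _ y| ≤ ∑ s, |p s - qn s| := tv_pushforward p qn _
      _ ≤ ε := hTV
  have hD : ∑ z : S × ({j : Fin n // j ≠ i} → S), |J z - q z.1 * PY z.2| ≤ 2 * ε := by
    have tri : ∀ z : S × ({j : Fin n // j ≠ i} → S),
        |J z - q z.1 * PY z.2| ≤ |J z - rvDist qn pairf z|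
          + |rvDist qn pairf z - q z.1 * PY z.2| := fun z => abs_sub_le _ _ _
    have t1 : ∑ z : S × ({j : Fin n // j ≠ i} → S), |J z - rvDist qn pairf z| ≤ ε := by
      calc ∑ z : S × ({j : Fin n // j ≠ i} → S), |J z - rvDist qn pairf z|
          ≤ ∑ s, |p s - qn s| := tv_pushforward p qn pairf
        _ ≤ ε := hTV
    have t2 : ∑ z : S × ({j : Fin n // j ≠ i} → S),
        |rvDist qn pairf z - q z.1 * PY z.2| ≤ ε := by
      have hpt : ∀ (x : S) (y : {j : Fin n // j ≠ i} → S),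
          |rvDist qn pairf (x, y) - q x * PY y|
            = q x * |PY y - rvDist qn
                (fun s : Fin n → S => fun j : {j : Fin n // j ≠ i} => s j.1) y| := by
        intro x y
        rw [hQpair x y, ← hQY y, ← mul_sub, abs_mul, abs_of_nonneg (hq.1 x), abs_sub_comm]
      calc ∑ z : S × ({j : Fin n // j ≠ i} → S), |rvDist qn pairf z - q z.1 * PY z.2|
          = ∑ x, ∑ y, |rvDist qn pairf (x, y) - q x * PY y| :=
            Fintype.sum_prod_type _
        _ = ∑ x, q x * ∑ y, |PY y - rvDist qn
              (fun s : Fin n → S => fun j : {j : Fin n // j ≠ i} => s j.1) y| := by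
            refine Finset.sum_congr rfl fun x _ => ?_
            rw [Finset.mul_sum]
            exact Finset.sum_congr rfl fun y _ => hpt x y
        _ = (∑ x, q x) * ∑ y, |PY y - rvDist qn
              (fun s : Fin n → S => fun j : {j : Fin n // j ≠ i} => s j.1) y| := by
            rw [← Finset.sum_mul]
        _ ≤ ε := by rw [hq.2, one_mul]; exact hTVY
    calc ∑ z : S × ({j : Fin n // j ≠ i} → S), |J z - q z.1 * PY z.2|
        ≤ ∑ z : S × ({j : Fin n // j ≠ i} → S), (|J z - rvDist qn pairf z|
            + |rvDist qn pairf z - q z.1 * PY z.2|) := Finset.sum_le_sum fun z _ => tri z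
      _ = (∑ z : S × ({j : Fin n // j ≠ i} → S), |J z - rvDist qn pairf z|)
          + ∑ z : S × ({j : Fin n // j ≠ i} → S), |rvDist qn pairf z - q z.1 * PY z.2| :=
            Finset.sum_add_distrib
      _ ≤ 2 * ε := by linarith
  -- the key information-theoretic bounds
  obtain ⟨C1, C2, C3⟩ := key J PX PY hJ0 hJ1 hPXm hPYm q hq.1 hq.2
  -- entropy of q bounds
  have hq1' : ∀ x, q x ≤ 1 := fun x => by
    rw [← hq.2]
    exact Finset.single_le_sum (fun x _ => hq.1 x) (Finset.mem_univ x)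
  have hHq0 : 0 ≤ ent q := Finset.sum_nonneg fun x _ => negMulLog_nonneg (hq.1 x) (hq1' x)
  have hHqc : ent q ≤ Real.log (Fintype.card S) := ent_le_log q hq.1 hq.2
  have hN1 : (1:ℝ) ≤ (Fintype.card S : ℝ) := by exact_mod_cast Fintype.card_pos (α := S)
  have hmut : mutI p (fun s => s i) (fun s => fun j : {j : Fin n // j ≠ i} => s j.1)
      = (∑ x, negMulLog (PX x)) + (∑ y, negMulLog (PY y)) - ∑ z, negMulLog (J z) := rfl
  have hδ0 : 0 ≤ ∑ x, |PX x - q x| := Finset.sum_nonneg fun x _ => abs_nonneg _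
  have hD0 : 0 ≤ ∑ z : S × ({j : Fin n // j ≠ i} → S), |J z - q z.1 * PY z.2| :=
    Finset.sum_nonneg fun z _ => abs_nonneg _
  refine arith (Fintype.card S) (ent q) _ ε hHq0 hHqc hε0 hε1 ?_ ?_ ?_
  · intro h2N
    have hN2 : (2:ℝ) ≤ (Fintype.card S : ℝ) := by exact_mod_cast h2N
    have m1 := F_mono hδ0 hεX (le_trans hε1 hN1) hN1
    have m2 := F_mono hD0 hD (by linarith) hN1
    rw [hmut]
    calc (∑ x, negMulLog (PX x)) + (∑ y, negMulLog (PY y)) - ∑ z, negMulLog (J z)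
        ≤ _ := C1
      _ ≤ (ε + ε * Real.log (Fintype.card S) + negMulLog ε)
          + (2 * ε + 2 * ε * Real.log (Fintype.card S) + negMulLog (2 * ε)) :=
        add_le_add m1 m2
  · have m1 := F_mono hδ0 hεX (le_trans hε1 hN1) hN1
    rw [hmut]
    calc (∑ x, negMulLog (PX x)) + (∑ y, negMulLog (PY y)) - ∑ z, negMulLog (J z)
        ≤ _ := C2
      _ ≤ ent q + (ε + ε * Real.log (Fintype.card S) + negMulLog ε) := by
        rw [ent]
        exact add_le_add le_rfl m1
  · rw [hmut]; exact C3

/-- **Lemma (Cuff et al. / Cervia et al., Lemma 6).** If a pmf `p` on `𝒮ⁿ` is within total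
variation `ε` of the i.i.d. product `q_S^{(n)}`, then
`Σᵢ I_p(Sᵢ; S_{∼i}) ≤ n · g(ε)` where
`g(ε) = 2√ε (H(q_S) + log |𝒮| + log (1/√ε))`. -/
theorem sum_mutual_information_le_of_close_to_iid
    {S : Type*} [Fintype S] [DecidableEq S]
    (q : S → ℝ) (hq : IsPMF q)
    (n : ℕ) (hn : 0 < n)
    (p : (Fin n → S) → ℝ) (hp : IsPMF p)
    (ε : ℝ) (hε0 : 0 < ε) (hε1 : ε ≤ 1)
    (hTV : ∑ s : Fin n → S, |p s - ∏ i, q (s i)| ≤ ε) :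
    ∑ i : Fin n,
        mutI p (fun s => s i) (fun s => fun j : {j : Fin n // j ≠ i} => s j.1) ≤
      (n : ℝ) *
        (2 * Real.sqrt ε *
          (ent q + Real.log (Fintype.card S) + Real.log (1 / Real.sqrt ε))) := by
  classical
  rcases isEmpty_or_nonempty S with hS | hS
  · exfalso
    have : Nonempty (Fin n) := ⟨⟨0, hn⟩⟩
    have he : IsEmpty (Fin n → S) := by infer_instance
    have := hp.2
    rw [Finset.univ_eq_empty, Finset.sum_empty] at this
    norm_num at this
  · have hbound : ∀ i : Fin n,
        mutI p (fun s => s i) (fun s => fun j : {j : Fin n // j ≠ i} => s j.1)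
          ≤ 2 * Real.sqrt ε *
              (ent q + Real.log (Fintype.card S) + Real.log (1 / Real.sqrt ε)) :=
      fun i => per_i_bound q hq n i p hp ε hε0 hε1 hTV
    calc ∑ i : Fin n,
          mutI p (fun s => s i) (fun s => fun j : {j : Fin n // j ≠ i} => s j.1)
        ≤ ∑ _i : Fin n, 2 * Real.sqrt ε *
            (ent q + Real.log (Fintype.card S) + Real.log (1 / Real.sqrt ε)) :=
          Finset.sum_le_sum fun i _ => hbound i
      _ = (n : ℝ) * (2 * Real.sqrt ε *
            (ent q + Real.log (Fintype.card S) + Real.log (1 / Real.sqrt ε))) := by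
          rw [Finset.sum_const, Finset.card_univ, Fintype.card_fin, nsmul_eq_mul]
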